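/- Let E₁ be a nonempty set, N ≥ 1 an integer, β > 0, let U : E₁ → ℝ be bounded, and let W : E₁ × E₁ → ℝ be bounded and symmetric (W(u,v) = W(v,u)). For x ∈ E₁^N define U_N(x) = Σ_{i=1}^N ( U(x_i) + (1/(2N)) Σ_{j≠i} W(x_i, x_j) ), and for i ∈ {1,…,N} and y ∈ E₁ let x^{i→y} be x with its i-th coordinate replaced by y, and set p_i(x,y) = min(1, exp(β (U_N(x) − U_N(x^{i→y})))). Then for all i, all x ∈ E₁^N and all y ∈ E₁, p_i(x,y) ≥ exp(−β (osc(U) + osc(W))), where osc(f) = sup f − inf f. -/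
import Mathlib


open Finset

/-- The oscillation `osc f = sup f - inf f` of a real-valued function. -/
noncomputable def oscOf {α : Type*} (f : α → ℝ) : ℝ :=
  sSup (Set.range f) - sInf (Set.range f)

/-- The mean-field energy
`U_N(x) = ∑_i ( U(x_i) + (1/(2N)) ∑_{j ≠ i} W(x_i, x_j) )`. -/
noncomputable def meanFieldEnergy {E₁ : Type*} (N : ℕ) (U : E₁ → ℝ) (W : E₁ → E₁ → ℝ)
    (x : Fin N → E₁) : ℝ :=
  ∑ i, (U (x i) + (1 / (2 * (N : ℝ))) * ∑ j ∈ Finset.univ.erase i, W (x i) (x j))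

/-- The Metropolis–Hastings acceptance probability
`p_i(x,y) = min(1, exp(β (U_N(x) - U_N(x^{i→y}))))` for moving the `i`-th particle to `y`. -/
noncomputable def mhAccept {E₁ : Type*} (N : ℕ) (β : ℝ) (U : E₁ → ℝ) (W : E₁ → E₁ → ℝ)
    (i : Fin N) (x : Fin N → E₁) (y : E₁) : ℝ :=
  min 1 (Real.exp (β * (meanFieldEnergy N U W x -
    meanFieldEnergy N U W (Function.update x i y))))

lemma diff_le_oscOf {α : Type*} (f : α → ℝ) (ha : BddAbove (Set.range f))
    (hb : BddBelow (Set.range f)) (a b : α) : f a - f b ≤ oscOf f := by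
  have h1 : f a ≤ sSup (Set.range f) := le_csSup ha ⟨a, rfl⟩
  have h2 : sInf (Set.range f) ≤ f b := csInf_le hb ⟨b, rfl⟩
  unfold oscOf; linarith

lemma oscOf_nonneg {α : Type*} [Nonempty α] (f : α → ℝ) (ha : BddAbove (Set.range f))
    (hb : BddBelow (Set.range f)) : 0 ≤ oscOf f := by
  obtain ⟨a⟩ := ‹Nonempty α›
  have := diff_le_oscOf f ha hb a a
  linarith

/-- Uniform lower bound for the Metropolis–Hastings acceptance probability:
`p_i(x,y) ≥ exp(-β (osc U + osc W))`. -/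
theorem mhAccept_lower_bound {E₁ : Type*} [Nonempty E₁] (N : ℕ) (hN : 1 ≤ N)
    (β : ℝ) (hβ : 0 < β)
    (U : E₁ → ℝ) (hUa : BddAbove (Set.range U)) (hUb : BddBelow (Set.range U))
    (W : E₁ → E₁ → ℝ)
    (hWa : BddAbove (Set.range fun p : E₁ × E₁ => W p.1 p.2))
    (hWb : BddBelow (Set.range fun p : E₁ × E₁ => W p.1 p.2))
    (hWsymm : ∀ u v, W u v = W v u)
    (i : Fin N) (x : Fin N → E₁) (y : E₁) :
    Real.exp (-β * (oscOf U + oscOf fun p : E₁ × E₁ => W p.1 p.2)) ≤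
      mhAccept N β U W i x y := by
  set oU := oscOf U with hoU
  set oW := oscOf (fun p : E₁ × E₁ => W p.1 p.2) with hoW
  have hoUnn : 0 ≤ oU := oscOf_nonneg U hUa hUb
  have hoWnn : 0 ≤ oW := oscOf_nonneg _ hWa hWb
  have hUd : ∀ a b : E₁, U a - U b ≤ oU := diff_le_oscOf U hUa hUb
  have hWd : ∀ a b c d : E₁, W a b - W c d ≤ oW := fun a b c d =>
    diff_le_oscOf (fun p : E₁ × E₁ => W p.1 p.2) hWa hWb (a, b) (c, d)
  set x' := Function.update x i y with hx'
  have hxi : x' i = y := Function.update_self i y x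
  have hxk : ∀ k, k ≠ i → x' k = x k := fun k hk => Function.update_of_ne hk y x
  have hNpos : (0:ℝ) < N := by exact_mod_cast hN
  -- the energy difference as a single sum
  have hdiff : meanFieldEnergy N U W x' - meanFieldEnergy N U W x =
      ∑ k, ((U (x' k) - U (x k)) +
        (1 / (2 * (N : ℝ))) * ∑ j ∈ univ.erase k, (W (x' k) (x' j) - W (x k) (x j))) := by
    unfold meanFieldEnergy
    rw [← Finset.sum_sub_distrib]
    apply Finset.sum_congr rfl
    intro k _
    rw [Finset.sum_sub_distrib, mul_sub]
    ring
  -- bound each term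
  have hbound : meanFieldEnergy N U W x' - meanFieldEnergy N U W x ≤ oU + oW := by
    rw [hdiff]
    have hmem : i ∈ (univ : Finset (Fin N)) := mem_univ i
    rw [← Finset.add_sum_erase _ _ hmem]
    have h1 : (U (x' i) - U (x i)) +
        (1 / (2 * (N : ℝ))) * ∑ j ∈ univ.erase i, (W (x' i) (x' j) - W (x i) (x j))
        ≤ oU + (1/2) * oW := by
      have hU1 : U (x' i) - U (x i) ≤ oU := hUd _ _
      have hS : ∑ j ∈ univ.erase i, (W (x' i) (x' j) - W (x i) (x j)) ≤
          ∑ _j ∈ univ.erase i, oW := by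
        apply Finset.sum_le_sum
        intro j hj
        exact hWd _ _ _ _
      have hcard : ((univ.erase i).card : ℝ) ≤ N := by
        exact_mod_cast Finset.card_le_card (Finset.erase_subset _ _) |>.trans
          (le_of_eq (Finset.card_univ.trans (Fintype.card_fin N)))
      have : (1 / (2 * (N : ℝ))) * ∑ j ∈ univ.erase i, (W (x' i) (x' j) - W (x i) (x j))
          ≤ (1 / (2 * (N : ℝ))) * (((univ.erase i).card : ℝ) * oW) := by
        apply mul_le_mul_of_nonneg_left _ (by positivity)
        simpa [Finset.sum_const, nsmul_eq_mul] using hS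
      have h2 : (1 / (2 * (N : ℝ))) * (((univ.erase i).card : ℝ) * oW) ≤ (1/2) * oW := by
        rw [← mul_assoc]
        apply mul_le_mul_of_nonneg_right _ hoWnn
        rw [div_mul_eq_mul_div, one_mul, div_le_iff₀ (by positivity)]
        nlinarith
      linarith
    have h2 : ∑ k ∈ univ.erase i, ((U (x' k) - U (x k)) +
        (1 / (2 * (N : ℝ))) * ∑ j ∈ univ.erase k, (W (x' k) (x' j) - W (x k) (x j)))
        ≤ ∑ _k ∈ univ.erase i, (1 / (2 * (N : ℝ))) * oW := by
      apply Finset.sum_le_sum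
      intro k hk
      have hki : k ≠ i := Finset.ne_of_mem_erase hk
      have hUk : U (x' k) - U (x k) = 0 := by rw [hxk k hki]; ring
      rw [hUk, zero_add]
      apply mul_le_mul_of_nonneg_left _ (by positivity)
      have hik : i ∈ univ.erase k := Finset.mem_erase.2 ⟨Ne.symm hki, mem_univ i⟩
      have : ∑ j ∈ univ.erase k, (W (x' k) (x' j) - W (x k) (x j)) ≤
          ∑ j ∈ univ.erase k, (if j = i then oW else 0) := by
        apply Finset.sum_le_sum
        intro j hj
        by_cases hji : j = i
        · simp only [hji, if_true]
          exact hWd _ _ _ _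
        · simp only [hji, if_false]
          rw [hxk k hki, hxk j hji]
          simp
      calc ∑ j ∈ univ.erase k, (W (x' k) (x' j) - W (x k) (x j))
          ≤ ∑ j ∈ univ.erase k, (if j = i then oW else 0) := this
        _ = oW := by rw [Finset.sum_ite_eq' (univ.erase k) i (fun _ => oW)]; simp [hik]
    have h3 : ∑ _k ∈ univ.erase i, (1 / (2 * (N : ℝ))) * oW ≤ (1/2) * oW := by
      rw [Finset.sum_const, nsmul_eq_mul]
      have hcard : ((univ.erase i).card : ℝ) ≤ N := by
        exact_mod_cast Finset.card_le_card (Finset.erase_subset _ _) |>.trans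
          (le_of_eq (Finset.card_univ.trans (Fintype.card_fin N)))
      rw [← mul_assoc]
      apply mul_le_mul_of_nonneg_right _ hoWnn
      rw [mul_div_assoc']
      rw [div_le_iff₀ (by positivity)]
      nlinarith
    linarith
  -- conclude
  have hexp : -β * (oU + oW) ≤ β * (meanFieldEnergy N U W x - meanFieldEnergy N U W x') := by
    have := hbound
    nlinarith
  unfold mhAccept
  rw [← hx']
  apply le_min
  · rw [← Real.exp_zero]
    apply Real.exp_le_exp.2
    nlinarith
  · exact Real.exp_le_exp.2 hexp
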